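/- A WDP with trigger b and factor γ is exactly an MDP with per-step constants φ_t = (1/sqrt(α_t) − 1)·(1-γ)·b and noise scale η = γ. That is, with these choices, the MDP accumulated constant φ̃_t = Σ_{i=1}^{t} sqrt(∏_{j=t+1-i}^{t} α_j)·φ_{t+1-i} equals (1 − sqrt(ᾱ_t))·(1-γ)·b, matching the WDP marginal x̃_t = sqrt(ᾱ_t)·x̃_0 + (1−sqrt(ᾱ_t))(1-γ)·b + γ·sqrt(1-ᾱ_t)·ε. -/

import Mathlib

open Finset

lemma wdp_key (α : ℕ → ℝ) (hα : ∀ t, 0 < α t) (t : ℕ) :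
    ∑ k ∈ Icc 1 t, Real.sqrt (∏ j ∈ Icc k t, α j) * (1 / Real.sqrt (α k) - 1)
      = 1 - Real.sqrt (∏ i ∈ Icc 1 t, α i) := by
  induction t with
  | zero => simp
  | succ t ih =>
    rw [Finset.sum_Icc_succ_top (by omega)]
    have hpos : ∀ a b : ℕ, (0:ℝ) ≤ ∏ j ∈ Icc a b, α j :=
      fun a b => Finset.prod_nonneg (fun j _ => (hα j).le)
    have hsq : (0:ℝ) < Real.sqrt (α (t+1)) := Real.sqrt_pos.2 (hα (t+1))
    have h1 : ∀ k ∈ Icc 1 t,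
        Real.sqrt (∏ j ∈ Icc k (t+1), α j) * (1 / Real.sqrt (α k) - 1)
          = Real.sqrt (α (t+1)) *
              (Real.sqrt (∏ j ∈ Icc k t, α j) * (1 / Real.sqrt (α k) - 1)) := by
      intro k hk
      rw [Finset.prod_Icc_succ_top (by simp at hk; omega), Real.sqrt_mul (hpos k t)]
      ring
    rw [Finset.sum_congr rfl h1, ← Finset.mul_sum, ih,
      Finset.prod_Icc_succ_top (by omega : 1 ≤ t + 1), Real.sqrt_mul (hpos 1 t)]
    have h2 : (∏ j ∈ Icc (t+1) (t+1), α j) = α (t+1) := by simp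
    rw [h2]
    field_simp
    ring

theorem wdp_is_mdp (d : ℕ)
    (α : ℕ → ℝ) (hα : ∀ t, α t ∈ Set.Ioo (0 : ℝ) 1)
    (γ : ℝ) (hγ : γ ∈ Set.Ioo (0 : ℝ) 1)
    (b : EuclideanSpace ℝ (Fin d))
    (φ : ℕ → EuclideanSpace ℝ (Fin d))
    (hφ : ∀ t, φ t = ((1 / Real.sqrt (α t) - 1) * (1 - γ)) • b)
    (η : ℝ) (hη : η = γ) :
    (∀ t : ℕ,
        (∑ i ∈ Icc 1 t,
            Real.sqrt (∏ j ∈ Icc (t + 1 - i) t, α j) • φ (t + 1 - i))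
          = ((1 - Real.sqrt (∏ i ∈ Icc 1 t, α i)) * (1 - γ)) • b)
      ∧ ∀ (t : ℕ) (x0 ε xt xtil0 xtil : EuclideanSpace ℝ (Fin d)),
          xt = Real.sqrt (∏ i ∈ Icc 1 t, α i) • x0
              + Real.sqrt (1 - ∏ i ∈ Icc 1 t, α i) • ε →
          xtil0 = γ • x0 + (1 - γ) • b →
          xtil = γ • xt + (1 - γ) • b →
          xtil = Real.sqrt (∏ i ∈ Icc 1 t, α i) • xtil0
            + ((1 - Real.sqrt (∏ i ∈ Icc 1 t, α i)) * (1 - γ)) • b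
            + (η * Real.sqrt (1 - ∏ i ∈ Icc 1 t, α i)) • ε := by
  constructor
  · intro t
    have hre : ∑ i ∈ Icc 1 t,
        Real.sqrt (∏ j ∈ Icc (t + 1 - i) t, α j) • φ (t + 1 - i)
        = ∑ k ∈ Icc 1 t, Real.sqrt (∏ j ∈ Icc k t, α j) • φ k := by
      apply Finset.sum_nbij' (fun i => t + 1 - i) (fun k => t + 1 - k)
      all_goals intro a ha <;> simp at ha ⊢ <;> omega
    rw [hre]
    have : ∀ k ∈ Icc 1 t, Real.sqrt (∏ j ∈ Icc k t, α j) • φ k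
        = (Real.sqrt (∏ j ∈ Icc k t, α j) * (1 / Real.sqrt (α k) - 1) * (1 - γ)) • b := by
      intro k _
      rw [hφ k, smul_smul]
      ring_nf
    rw [Finset.sum_congr rfl this, ← Finset.sum_smul]
    congr 1
    rw [← Finset.sum_mul, wdp_key α (fun s => (hα s).1) t]
  · intro t x0 ε xt xtil0 xtil h1 h2 h3
    subst h1 h2 h3 hη
    simp only [smul_add, smul_smul]
    module
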